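/- Let X ∈ Mat_n(k) and let I_n, w₀ be the identity and antidiagonal permutation matrices. For i, j ∈ {1,…,n}, the rank of the top-left (n+i)×(n+j) submatrix of the block matrix [[X, I_n], [w₀, 0]] equals i + j + rank of the bottom-left (n−j)×(n−i) submatrix of X (entries X(r,c) with r > j, c ≤ n−i). -/

import Mathlib

open Matrix

def w0 (k : Type*) [Field k] (n : ℕ) : Matrix (Fin n) (Fin n) k :=
  Matrix.of fun i j => if j = i.rev then 1 else 0

/-- The `2n × 2n` block matrix `[[X, I], [w₀, 0]]`, reindexed by `Fin (n+n)`. -/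
def blockMI {k : Type*} [Field k] {n : ℕ} (X : Matrix (Fin n) (Fin n) k) :
    Matrix (Fin (n + n)) (Fin (n + n)) k :=
  (Matrix.fromBlocks X 1 (w0 k n) 0).submatrix finSumFinEquiv.symm finSumFinEquiv.symm

section Aux

variable {R : Type*} [Field R]

lemma rank_reindex' {m n m' n' : Type*} [Fintype n] [Fintype n']
    (e₁ : m ≃ m') (e₂ : n ≃ n') (A : Matrix m n R) :
    rank (reindex e₁ e₂ A) = rank A := by
  rw [rank, rank, mulVecLin_reindex, LinearMap.range_comp, LinearMap.range_comp,
    LinearEquiv.range, Submodule.map_top, LinearEquiv.finrank_map_eq]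

lemma rank_submatrix' {m n m' n' : Type*} [Fintype n] [Fintype n']
    (A : Matrix m' n' R) (e₁ : m ≃ m') (e₂ : n ≃ n') :
    (A.submatrix e₁ e₂).rank = A.rank := by
  simpa using rank_reindex' e₁.symm e₂.symm A

lemma finrank_prod_submodule {M N : Type*} [AddCommGroup M] [AddCommGroup N]
    [Module R M] [Module R N] (p : Submodule R M) (q : Submodule R N)
    [FiniteDimensional R M] [FiniteDimensional R N] :
    Module.finrank R (p.prod q) = Module.finrank R p + Module.finrank R q := by
  have hinj : Function.Injective (p.subtype.prodMap q.subtype) := by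
    intro a b h
    have h1 := congrArg Prod.fst h
    have h2 := congrArg Prod.snd h
    simp only [LinearMap.prodMap_apply, Submodule.coe_subtype] at h1 h2
    exact Prod.ext (Subtype.ext h1) (Subtype.ext h2)
  have hr : LinearMap.range (p.subtype.prodMap q.subtype) = p.prod q := by
    ext x
    constructor
    · rintro ⟨⟨a, b⟩, rfl⟩
      exact ⟨a.2, b.2⟩
    · rintro ⟨h1, h2⟩
      exact ⟨(⟨x.1, h1⟩, ⟨x.2, h2⟩), rfl⟩
  rw [← hr, ← (LinearEquiv.ofInjective _ hinj).finrank_eq, Module.finrank_prod]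

lemma range_prodMap' {M N M' N' : Type*} [AddCommGroup M] [AddCommGroup N]
    [AddCommGroup M'] [AddCommGroup N'] [Module R M] [Module R N] [Module R M'] [Module R N']
    (f : M →ₗ[R] M') (g : N →ₗ[R] N') :
    LinearMap.range (f.prodMap g) = (LinearMap.range f).prod (LinearMap.range g) := by
  ext ⟨x, y⟩
  constructor
  · rintro ⟨⟨a, b⟩, h⟩
    rw [LinearMap.prodMap_apply, Prod.mk.injEq] at h
    exact ⟨⟨a, h.1⟩, ⟨b, h.2⟩⟩
  · rintro ⟨⟨a, ha⟩, ⟨b, hb⟩⟩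
    exact ⟨(a, b), by simp [ha, hb]⟩

lemma rank_fromBlocks_diag {m₁ m₂ n₁ n₂ : Type*} [Fintype m₁] [Fintype m₂] [Fintype n₁]
    [Fintype n₂] (A : Matrix m₁ n₁ R) (D : Matrix m₂ n₂ R) :
    (fromBlocks A 0 0 D).rank = A.rank + D.rank := by
  have h : (fromBlocks A (0 : Matrix m₁ n₂ R) (0 : Matrix m₂ n₁ R) D).mulVecLin =
      (LinearEquiv.sumArrowLequivProdArrow m₁ m₂ R R).symm.toLinearMap.comp
        ((A.mulVecLin.prodMap D.mulVecLin).comp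
          (LinearEquiv.sumArrowLequivProdArrow n₁ n₂ R R).toLinearMap) := by
    ext x r
    cases r <;>
      simp [mulVecLin_apply, fromBlocks_mulVec, LinearEquiv.sumArrowLequivProdArrow,
        Equiv.sumArrowEquivProdArrow]
  rw [rank, h, LinearMap.range_comp,
    LinearMap.range_comp_of_range_eq_top _ (LinearEquiv.range _),
    LinearEquiv.finrank_map_eq, range_prodMap', finrank_prod_submodule, rank, rank]

lemma rank_fromBlocks_inv₁₁ {m l n : Type*} [Fintype m] [Fintype l] [Fintype n]
    [DecidableEq m] [DecidableEq l] [DecidableEq n]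
    (A : Matrix m m R) [Invertible A] (B : Matrix m n R) (C : Matrix l m R) (D : Matrix l n R) :
    (fromBlocks A B C D).rank = Fintype.card m + (D - C * ⅟A * B).rank := by
  rw [fromBlocks_eq_of_invertible₁₁ A B C D]
  have h1 : IsUnit (fromBlocks (1 : Matrix m m R) 0 (C * ⅟A) (1 : Matrix l l R)).det := by
    rw [det_fromBlocks_zero₁₂]; simp
  have h2 : IsUnit (fromBlocks (1 : Matrix m m R) (⅟A * B) 0 (1 : Matrix n n R)).det := by
    rw [det_fromBlocks_zero₂₁]; simp
  rw [rank_mul_eq_left_of_isUnit_det _ _ h2, rank_mul_eq_right_of_isUnit_det _ _ h1,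
    rank_fromBlocks_diag, rank_of_isUnit A (isUnit_of_invertible A)]

lemma w0_mul_w0 (n : ℕ) : w0 R n * w0 R n = 1 := by
  ext a b
  simp only [mul_apply, w0, of_apply]
  rw [Finset.sum_eq_single a.rev]
  · simp [one_apply, Fin.rev_rev, eq_comm]
  · intro c _ hc
    simp [hc]
  · simp

noncomputable instance w0Invertible (n : ℕ) : Invertible (w0 R n) :=
  invertibleOfLeftInverse _ (w0 R n) (w0_mul_w0 n)

/-- Row reindexing function. -/
def rowF (n i j : ℕ) (hi' : i ≤ n) (hj' : j ≤ n) :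
    (Fin i ⊕ Fin j) ⊕ Fin (n - j) → Fin (n + i)
  | .inl (.inl r) => ⟨n + r, by omega⟩
  | .inl (.inr a) => ⟨a, by omega⟩
  | .inr a => ⟨j + a, by omega⟩

lemma rowF_inj (n i j : ℕ) (hi' : i ≤ n) (hj' : j ≤ n) :
    Function.Injective (rowF n i j hi' hj') := by
  rintro ((⟨r, hr⟩ | ⟨a, ha⟩) | ⟨a, ha⟩) ((⟨s, hs⟩ | ⟨b, hb⟩) | ⟨b, hb⟩) h <;>
    simp only [rowF, Fin.mk.injEq] at h <;>
    first
      | (simp only [Sum.inl.injEq, Sum.inr.injEq, Fin.mk.injEq]; omega)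
      | (exact absurd h (by omega))

/-- Row reindexing equivalence. -/
noncomputable def rowE (n i j : ℕ) (hi' : i ≤ n) (hj' : j ≤ n) :
    (Fin i ⊕ Fin j) ⊕ Fin (n - j) ≃ Fin (n + i) :=
  Equiv.ofBijective _ ((Fintype.bijective_iff_injective_and_card _).mpr
    ⟨rowF_inj n i j hi' hj', by simp; omega⟩)

/-- Column reindexing function. -/
def colF (n i j : ℕ) (hi' : i ≤ n) (hj' : j ≤ n) :
    (Fin i ⊕ Fin j) ⊕ Fin (n - i) → Fin (n + j)
  | .inl (.inl b) => ⟨n - i + b, by omega⟩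
  | .inl (.inr b) => ⟨n + b, by omega⟩
  | .inr b => ⟨b, by omega⟩

lemma colF_inj (n i j : ℕ) (hi' : i ≤ n) (hj' : j ≤ n) :
    Function.Injective (colF n i j hi' hj') := by
  rintro ((⟨r, hr⟩ | ⟨a, ha⟩) | ⟨a, ha⟩) ((⟨s, hs⟩ | ⟨b, hb⟩) | ⟨b, hb⟩) h <;>
    simp only [colF, Fin.mk.injEq] at h <;>
    first
      | (simp only [Sum.inl.injEq, Sum.inr.injEq, Fin.mk.injEq]; omega)
      | (exact absurd h (by omega))

/-- Column reindexing equivalence. -/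
noncomputable def colE (n i j : ℕ) (hi' : i ≤ n) (hj' : j ≤ n) :
    (Fin i ⊕ Fin j) ⊕ Fin (n - i) ≃ Fin (n + j) :=
  Equiv.ofBijective _ ((Fintype.bijective_iff_injective_and_card _).mpr
    ⟨colF_inj n i j hi' hj', by simp; omega⟩)

lemma fsfe_symm_lt {n m v : ℕ} (h : v < n + m) (hv : v < n) :
    finSumFinEquiv.symm (⟨v, h⟩ : Fin (n + m)) = Sum.inl ⟨v, hv⟩ := by
  rw [Equiv.symm_apply_eq]
  exact Fin.ext (by simp)

lemma fsfe_symm_ge {n m v : ℕ} (h : n + v < n + m) :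
    finSumFinEquiv.symm (⟨n + v, h⟩ : Fin (n + m)) = Sum.inr ⟨v, by omega⟩ := by
  rw [Equiv.symm_apply_eq]
  exact Fin.ext (by simp)

end Aux

/-- The rank of the top-left `(n+i) × (n+j)` submatrix of `[[X, I], [w₀, 0]]` equals
`i + j +` the rank of the submatrix of `X` with rows `> j` and columns `≤ n - i`. -/
theorem stmt_17 {k : Type*} [Field k] {n : ℕ}
    (X : Matrix (Fin n) (Fin n) k)
    (i j : ℕ) (hi : 1 ≤ i) (hi' : i ≤ n) (hj : 1 ≤ j) (hj' : j ≤ n) :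
    ((blockMI X).submatrix (Fin.castLE (show n + i ≤ n + n by omega))
        (Fin.castLE (show n + j ≤ n + n by omega))).rank =
      i + j + (X.submatrix
          (fun a : Fin (n - j) => (⟨j + (a : ℕ), by omega⟩ : Fin n))
          (Fin.castLE (show n - i ≤ n by omega))).rank := by
  set M := (blockMI X).submatrix (Fin.castLE (show n + i ≤ n + n by omega))
      (Fin.castLE (show n + j ≤ n + n by omega)) with hM
  set Y := X.submatrix (fun a : Fin (n - j) => (⟨j + (a : ℕ), by omega⟩ : Fin n))
      (Fin.castLE (show n - i ≤ n by omega)) with hY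
  set P := w0 k i with hP
  set Q : Matrix (Fin j) (Fin i) k :=
    Matrix.of (fun a b => X ⟨a, by omega⟩ ⟨n - i + b, by omega⟩) with hQ
  set T : Matrix (Fin i ⊕ Fin j) (Fin i ⊕ Fin j) k := fromBlocks P 0 Q 1 with hT
  set C₁ : Matrix (Fin (n - j)) (Fin i) k :=
    Matrix.of (fun a b => X ⟨j + a, by omega⟩ ⟨n - i + b, by omega⟩) with hC₁
  set B₂ : Matrix (Fin j) (Fin (n - i)) k :=
    Matrix.of (fun a b => X ⟨a, by omega⟩ ⟨b, by omega⟩) with hB₂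
  set N : Matrix ((Fin i ⊕ Fin j) ⊕ Fin (n - j)) ((Fin i ⊕ Fin j) ⊕ Fin (n - i)) k :=
    fromBlocks T (fromRows 0 B₂) (fromCols C₁ 0) Y with hN
  have key : N = M.submatrix (rowE n i j hi' hj') (colE n i j hi' hj') := by
    ext p q
    have hrow : ∀ p, (Fin.castLE (show n + i ≤ n + n by omega) (rowE n i j hi' hj' p)) =
        (Fin.castLE (show n + i ≤ n + n by omega) (rowF n i j hi' hj' p)) := fun _ => rfl
    rcases p with ((⟨r, hr⟩ | ⟨a, ha⟩) | ⟨a, ha⟩) <;>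
      rcases q with ((⟨s, hs⟩ | ⟨b, hb⟩) | ⟨b, hb⟩) <;>
      (show _ = M (rowE n i j hi' hj' _) (colE n i j hi' hj' _)
       rw [show (rowE n i j hi' hj') = rowF n i j hi' hj' from rfl,
         show (colE n i j hi' hj') = colF n i j hi' hj' from rfl]
       simp only [hM, hN, submatrix_apply, rowF, colF, blockMI, Fin.castLE_mk]) <;>
      [rw [fsfe_symm_ge, fsfe_symm_lt _ (show n - i + s < n by omega)];
       rw [fsfe_symm_ge, fsfe_symm_ge];
       rw [fsfe_symm_ge, fsfe_symm_lt _ (show b < n by omega)];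
       rw [fsfe_symm_lt _ (show a < n by omega), fsfe_symm_lt _ (show n - i + s < n by omega)];
       rw [fsfe_symm_lt _ (show a < n by omega), fsfe_symm_ge];
       rw [fsfe_symm_lt _ (show a < n by omega), fsfe_symm_lt _ (show b < n by omega)];
       rw [fsfe_symm_lt _ (show j + a < n by omega), fsfe_symm_lt _ (show n - i + s < n by omega)];
       rw [fsfe_symm_lt _ (show j + a < n by omega), fsfe_symm_ge];
       rw [fsfe_symm_lt _ (show j + a < n by omega), fsfe_symm_lt _ (show b < n by omega)]] <;>
      (simp only [fromBlocks_apply₁₁, fromBlocks_apply₁₂, fromBlocks_apply₂₁,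
         fromBlocks_apply₂₂, hT, hP, hQ, hC₁, hB₂, hY, w0, one_apply, fromRows, fromCols,
         of_apply, Sum.elim_inl, Sum.elim_inr, submatrix_apply, Fin.castLE_mk, Matrix.zero_apply,
         Fin.ext_iff, Fin.val_rev]
       all_goals first
         | rfl
         | (split_ifs <;> first | rfl | (exfalso; omega))
         | omega)
  haveI : Invertible P := w0Invertible i
  haveI : Invertible (1 : Matrix (Fin j) (Fin j) k) := invertibleOne
  haveI : Invertible T := fromBlocksZero₁₂Invertible P Q 1
  have h1 : M.rank = N.rank := by rw [key, rank_submatrix']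
  have hTR : T * (fromRows (0 : Matrix (Fin i) (Fin (n - i)) k) B₂) = fromRows 0 B₂ := by
    rw [hT, fromBlocks_mul_fromRows]
    simp
  have h2 : ⅟T * (fromRows (0 : Matrix (Fin i) (Fin (n - i)) k) B₂) = fromRows 0 B₂ := by
    conv_lhs => rw [← hTR]
    rw [Matrix.invOf_mul_cancel_left]
  have hz : (fromCols C₁ (0 : Matrix (Fin (n - j)) (Fin j) k)) * ⅟T *
      (fromRows (0 : Matrix (Fin i) (Fin (n - i)) k) B₂) = 0 := by
    rw [Matrix.mul_assoc, h2, fromCols_mul_fromRows]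
    simp
  rw [h1, hN, rank_fromBlocks_inv₁₁, hz, sub_zero]
  simp
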